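/- Bound on the solution: There exists a constant C, independent of ε₁,…,εₙ (depending only on n, α and T), such that for every choice of parameters 0 < ε₁ < … < εₙ < 1, every continuous data f, φ_L, φ_R, φ_B, and every solution u of the problem Lu = f on Ω with β₀u(0,t) = φ_L(t), β₁u(1,t) = φ_R(t) for t ∈ [0,T] and u(x,0) = φ_B(x) for x ∈ [0,1], with u in the domain of L, one has for all (x,t) ∈ Ω̄ and each i = 1,…,n: |u_i(x,t)| ≤ C( ‖φ_L‖ + ‖φ_R‖ + ‖φ_B‖ + ‖f‖ ), where ‖·‖ denotes the supremum over the relevant domain of the maximum of the absolute values of all components. -/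

import Mathlib

open Set Filter Topology

lemma slope_nonneg_limit {f : ℝ → ℝ} {d x : ℝ} {s S : Set ℝ}
    (hd : HasDerivWithinAt f d s x) (hS : S ⊆ s \ {x}) (hx : x ∈ closure S)
    (h : ∀ y ∈ S, 0 ≤ (f y - f x) / (y - x)) : 0 ≤ d := by
  have ht : Tendsto (slope f x) (𝓝[S] x) (𝓝 d) :=
    (hasDerivWithinAt_iff_tendsto_slope.mp hd).mono_left
      (nhdsWithin_mono x hS)
  have hne : (𝓝[S] x).NeBot := mem_closure_iff_nhdsWithin_neBot.mp hx
  refine ge_of_tendsto ht ?_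
  filter_upwards [self_mem_nhdsWithin] with y hy
  simpa [slope_def_field, div_eq_div_iff] using h y hy

lemma slope_nonpos_limit {f : ℝ → ℝ} {d x : ℝ} {s S : Set ℝ}
    (hd : HasDerivWithinAt f d s x) (hS : S ⊆ s \ {x}) (hx : x ∈ closure S)
    (h : ∀ y ∈ S, (f y - f x) / (y - x) ≤ 0) : d ≤ 0 := by
  have : 0 ≤ -d := by
    refine slope_nonneg_limit hd.neg hS hx (fun y hy => ?_)
    have h1 := h y hy
    have : (-f y - -f x) / (y - x) = -((f y - f x) / (y - x)) := by ring
    simp only [Pi.neg_apply]; rw [this]; linarith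
  linarith

/-- Maximum principle for the coupled reaction–diffusion system with Robin
boundary conditions. -/
lemma max_principle
    (n : ℕ) (T : ℝ) (hT : 0 < T) (α : ℝ) (hα0 : 0 < α)
    (ε : Fin (n + 1) → ℝ) (hε : ∀ i, 0 < ε i)
    (a : Fin (n + 1) → Fin (n + 1) → ℝ → ℝ → ℝ)
    (haod : ∀ i j, i ≠ j → ∀ x ∈ Set.Icc (0:ℝ) 1, ∀ t ∈ Set.Icc (0:ℝ) T,
        a i j x t ≤ 0)
    (hasum : ∀ i, ∀ x ∈ Set.Icc (0:ℝ) 1, ∀ t ∈ Set.Icc (0:ℝ) T,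
        α < ∑ j, a i j x t)
    (w wx wt wxx : Fin (n + 1) → ℝ → ℝ → ℝ)
    (hw_cont : ∀ i, ContinuousOn (fun p : ℝ × ℝ => w i p.1 p.2)
        (Set.Icc 0 1 ×ˢ Set.Icc 0 T))
    (hwx : ∀ i, ∀ t ∈ Set.Icc (0:ℝ) T, ∀ x ∈ Set.Icc (0:ℝ) 1,
        HasDerivWithinAt (fun y => w i y t) (wx i x t) (Set.Icc 0 1) x)
    (hwt : ∀ i, ∀ x ∈ Set.Ioo (0:ℝ) 1, ∀ t ∈ Set.Ioc (0:ℝ) T,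
        HasDerivWithinAt (fun s => w i x s) (wt i x t) (Set.Icc 0 T) t)
    (hwxx : ∀ i, ∀ t ∈ Set.Ioc (0:ℝ) T, ∀ x ∈ Set.Ioo (0:ℝ) 1,
        HasDerivWithinAt (fun y => wx i y t) (wxx i x t) (Set.Ioo 0 1) x)
    (hL : ∀ i, ∀ x ∈ Set.Ioo (0:ℝ) 1, ∀ t ∈ Set.Ioc (0:ℝ) T,
        0 ≤ wt i x t - ε i * wxx i x t + ∑ j, a i j x t * w j x t)
    (hB0 : ∀ i, ∀ t ∈ Set.Icc (0:ℝ) T,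
        0 ≤ w i 0 t - Real.sqrt (ε i) * wx i 0 t)
    (hB1 : ∀ i, ∀ t ∈ Set.Icc (0:ℝ) T,
        0 ≤ w i 1 t + Real.sqrt (ε i) * wx i 1 t)
    (hInit : ∀ i, ∀ x ∈ Set.Icc (0:ℝ) 1, 0 ≤ w i x 0) :
    ∀ i, ∀ x ∈ Set.Icc (0:ℝ) 1, ∀ t ∈ Set.Icc (0:ℝ) T, 0 ≤ w i x t := by
  set Q : Set (ℝ × ℝ) := Set.Icc 0 1 ×ˢ Set.Icc 0 T with hQ
  have hQc : IsCompact Q := isCompact_Icc.prod isCompact_Icc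
  have hQne : Q.Nonempty := ⟨(0, 0), ⟨⟨le_rfl, zero_le_one⟩, ⟨le_rfl, hT.le⟩⟩⟩
  choose p hp hmin using fun i => hQc.exists_isMinOn hQne (hw_cont i)
  obtain ⟨i₀, -, hi₀⟩ := Finset.exists_min_image Finset.univ
    (fun i => w i (p i).1 (p i).2) Finset.univ_nonempty
  set x₀ := (p i₀).1 with hx₀def
  set t₀ := (p i₀).2 with ht₀def
  set m := w i₀ x₀ t₀ with hm_def
  have hglob : ∀ j, ∀ x ∈ Set.Icc (0:ℝ) 1, ∀ t ∈ Set.Icc (0:ℝ) T,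
      m ≤ w j x t := by
    intro j x hx t ht
    exact (hi₀ j (Finset.mem_univ j)).trans (hmin j (Set.mk_mem_prod hx ht))
  have hx₀ : x₀ ∈ Set.Icc (0:ℝ) 1 := (hp i₀).1
  have ht₀ : t₀ ∈ Set.Icc (0:ℝ) T := (hp i₀).2
  suffices hm : 0 ≤ m by
    intro i x hx t ht; exact hm.trans (hglob i x hx t ht)
  by_contra hmneg
  push_neg at hmneg
  -- t₀ > 0 (else initial condition contradicts)
  rcases ht₀.1.eq_or_lt with ht0 | ht0
  · exact absurd (hInit i₀ x₀ hx₀) (by rw [← ht0] at hm_def; linarith)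
  have ht₀' : t₀ ∈ Set.Ioc (0:ℝ) T := ⟨ht0, ht₀.2⟩
  have hsli : ContinuousOn (fun y => w i₀ y t₀) (Set.Icc 0 1) := by
    have : ContinuousOn (fun y : ℝ => ((y, t₀) : ℝ × ℝ)) (Set.Icc 0 1) :=
      (continuous_id.prodMk continuous_const).continuousOn
    exact (hw_cont i₀).comp this (fun y hy => Set.mk_mem_prod hy ht₀)
  rcases hx₀.1.eq_or_lt with hx0 | hx0
  · -- x₀ = 0 : Robin condition at left violated
    have hd : HasDerivWithinAt (fun y => w i₀ y t₀) (wx i₀ 0 t₀)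
        (Set.Icc 0 1) 0 := hwx i₀ t₀ ht₀ 0 ⟨le_rfl, zero_le_one⟩
    have hwx0 : 0 ≤ wx i₀ 0 t₀ := by
      refine slope_nonneg_limit hd (S := Set.Ioc 0 1) ?_ ?_ ?_
      · intro y hy; exact ⟨⟨hy.1.le, hy.2⟩, (ne_of_gt hy.1)⟩
      · rw [closure_Ioc one_ne_zero.symm]; exact ⟨le_rfl, zero_le_one⟩
      · intro y hy
        have h1 : m ≤ w i₀ y t₀ := hglob i₀ y ⟨hy.1.le, hy.2⟩ t₀ ht₀
        have h2 : w i₀ 0 t₀ = m := by rw [hm_def, ← hx0]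
        rw [h2]
        apply div_nonneg (by linarith) (by linarith [hy.1])
    have := hB0 i₀ t₀ ht₀
    have hsq : 0 < Real.sqrt (ε i₀) := Real.sqrt_pos.mpr (hε i₀)
    have h2 : w i₀ 0 t₀ = m := by rw [hm_def, ← hx0]
    nlinarith
  rcases hx₀.2.lt_or_eq with hx1 | hx1
  · -- interior in x
    have hx₀' : x₀ ∈ Set.Ioo (0:ℝ) 1 := ⟨hx0, hx1⟩
    -- (a)  time derivative nonpositive
    have hwt0 : wt i₀ x₀ t₀ ≤ 0 := by
      refine slope_nonpos_limit (hwt i₀ x₀ hx₀' t₀ ht₀')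
        (S := Set.Ico 0 t₀) ?_ ?_ ?_
      · intro s hs; exact ⟨⟨hs.1, hs.2.le.trans ht₀.2⟩, ne_of_lt hs.2⟩
      · rw [closure_Ico (ne_of_lt ht0)]; exact ⟨ht0.le, le_rfl⟩
      · intro s hs
        have h1 : m ≤ w i₀ x₀ s := hglob i₀ x₀ hx₀ s ⟨hs.1, hs.2.le.trans ht₀.2⟩
        apply div_nonpos_of_nonneg_of_nonpos (by rw [← hm_def]; linarith)
          (by linarith [hs.2])
    -- (b)  wx vanishes at the interior minimum
    have hloc : IsLocalMin (fun y => w i₀ y t₀) x₀ := by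
      filter_upwards [Icc_mem_nhds hx0 hx1] with y hy
      exact hglob i₀ y hy t₀ ht₀
    have hwx0 : wx i₀ x₀ t₀ = 0 :=
      hloc.hasDerivAt_eq_zero
        ((hwx i₀ t₀ ht₀ x₀ hx₀).hasDerivAt (Icc_mem_nhds hx0 hx1))
    -- (c)  second derivative nonnegative, via MVT points to the right
    have hMVT : ∀ y, x₀ < y → y < 1 →
        ∃ ξ, ξ ∈ Set.Ioo x₀ y ∧ 0 ≤ wx i₀ ξ t₀ := by
      intro y hy1 hy2
      have hcont : ContinuousOn (fun z => w i₀ z t₀) (Set.Icc x₀ y) :=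
        hsli.mono (Set.Icc_subset_Icc hx₀.1 hy2.le)
      have hder : ∀ z ∈ Set.Ioo x₀ y,
          HasDerivAt (fun z => w i₀ z t₀) (wx i₀ z t₀) z := by
        intro z hz
        have hz' : z ∈ Set.Icc (0:ℝ) 1 := ⟨(hx0.trans hz.1).le, hz.2.le.trans hy2.le⟩
        exact (hwx i₀ t₀ ht₀ z hz').hasDerivAt
          (Icc_mem_nhds (hx0.trans hz.1) (hz.2.trans_le hy2.le))
      obtain ⟨ξ, hξ, hξeq⟩ := exists_hasDerivAt_eq_slope
        (fun z => w i₀ z t₀) (fun z => wx i₀ z t₀) hy1 hcont hder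
      refine ⟨ξ, hξ, ?_⟩
      rw [hξeq]
      have h1 : m ≤ w i₀ y t₀ := hglob i₀ y ⟨(hx0.trans hy1).le, hy2.le⟩ t₀ ht₀
      apply div_nonneg (by rw [← hm_def]; linarith) (by linarith)
    set S : Set ℝ := {ξ | ξ ∈ Set.Ioo x₀ 1 ∧ 0 ≤ wx i₀ ξ t₀} with hSdef
    have hwxx0 : 0 ≤ wxx i₀ x₀ t₀ := by
      refine slope_nonneg_limit (hwxx i₀ t₀ ht₀' x₀ hx₀') (S := S) ?_ ?_ ?_
      · intro ξ hξ
        exact ⟨⟨hx0.trans hξ.1.1, hξ.1.2⟩, ne_of_gt hξ.1.1⟩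
      · rw [Metric.mem_closure_iff]
        intro δ hδ
        set y := min (x₀ + δ) ((x₀ + 1) / 2) with hy
        have hy1 : x₀ < y := lt_min (by linarith) (by linarith)
        have hy2 : y < 1 := (min_le_right _ _).trans_lt (by linarith)
        obtain ⟨ξ, hξmem, hξpos⟩ := hMVT y hy1 hy2
        refine ⟨ξ, ⟨⟨hξmem.1, hξmem.2.trans hy2⟩, hξpos⟩, ?_⟩
        rw [Real.dist_eq, abs_sub_comm, abs_of_pos (by linarith [hξmem.1])]
        have := min_le_left (x₀ + δ) ((x₀ + 1) / 2)
        linarith [hξmem.2]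
      · intro ξ hξ
        rw [hwx0]
        exact div_nonneg (by linarith [hξ.2]) (by linarith [hξ.1.1])
    -- (d)  the reaction term is strictly negative: contradiction with hL
    have hsum_le : ∑ j, a i₀ j x₀ t₀ * w j x₀ t₀ ≤ (∑ j, a i₀ j x₀ t₀) * m := by
      rw [Finset.sum_mul]
      apply Finset.sum_le_sum
      intro j _
      by_cases hji : j = i₀
      · subst hji; rw [← hm_def]
      · exact mul_le_mul_of_nonpos_left (hglob j x₀ hx₀ t₀ ht₀)
          (haod i₀ j (Ne.symm hji) x₀ hx₀ t₀ ht₀)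
    have hαs := hasum i₀ x₀ hx₀ t₀ ht₀
    have h1 : (∑ j, a i₀ j x₀ t₀) * m < α * m :=
      mul_lt_mul_of_neg_right hαs hmneg
    have h2 := hL i₀ x₀ hx₀' t₀ ht₀'
    nlinarith [mul_nonneg (hε i₀).le hwxx0, mul_neg_of_pos_of_neg hα0 hmneg]
  · -- x₀ = 1 : Robin condition at the right violated
    have hd : HasDerivWithinAt (fun y => w i₀ y t₀) (wx i₀ 1 t₀)
        (Set.Icc 0 1) 1 := hwx i₀ t₀ ht₀ 1 ⟨zero_le_one, le_rfl⟩
    have hwx1 : wx i₀ 1 t₀ ≤ 0 := by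
      refine slope_nonpos_limit hd (S := Set.Ico 0 1) ?_ ?_ ?_
      · intro y hy; exact ⟨⟨hy.1, hy.2.le⟩, ne_of_lt hy.2⟩
      · rw [closure_Ico one_ne_zero.symm]; exact ⟨zero_le_one, le_rfl⟩
      · intro y hy
        have h1 : m ≤ w i₀ y t₀ := hglob i₀ y ⟨hy.1, hy.2.le⟩ t₀ ht₀
        have h2 : w i₀ 1 t₀ = m := by rw [hm_def, hx1]
        rw [h2]
        apply div_nonpos_of_nonneg_of_nonpos (by linarith) (by linarith [hy.2])
    have := hB1 i₀ t₀ ht₀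
    have hsq : 0 < Real.sqrt (ε i₀) := Real.sqrt_pos.mpr (hε i₀)
    have h2 : w i₀ 1 t₀ = m := by rw [hm_def, hx1]
    nlinarith


/- STATEMENT 2: Bound on the solution.  The constant `C` depends only on
`n`, `α` and `T`; it is chosen before the parameters `ε`, the matrix `A`,
the data `f, φL, φR, φB` and the solution `u`, hence is independent of them.
The norms `‖·‖` are rendered by quantifying over arbitrary upper bounds
`bL, bR, bB, bf` of the corresponding suprema. -/
theorem stmt_2
    (n : ℕ) (T : ℝ) (hT : 0 < T) (α : ℝ) (hα0 : 0 < α) :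
    ∃ C : ℝ, 0 < C ∧
      ∀ (ε : Fin (n + 1) → ℝ), (∀ i, 0 < ε i) → (∀ i, ε i < 1) → StrictMono ε →
      ∀ (a : Fin (n + 1) → Fin (n + 1) → ℝ → ℝ → ℝ),
      (∀ i j, ContinuousOn (fun p : ℝ × ℝ => a i j p.1 p.2)
        (Set.Icc 0 1 ×ˢ Set.Icc 0 T)) →
      (∀ i, ∀ x ∈ Set.Icc (0:ℝ) 1, ∀ t ∈ Set.Icc (0:ℝ) T,
        ∑ j ∈ Finset.univ.erase i, |a i j x t| < a i i x t) →
      (∀ i j, i ≠ j → ∀ x ∈ Set.Icc (0:ℝ) 1, ∀ t ∈ Set.Icc (0:ℝ) T,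
        a i j x t ≤ 0) →
      (∀ i, ∀ x ∈ Set.Icc (0:ℝ) 1, ∀ t ∈ Set.Icc (0:ℝ) T, α < ∑ j, a i j x t) →
      -- continuous data :
      ∀ (f : Fin (n + 1) → ℝ → ℝ → ℝ),
      (∀ i, ContinuousOn (fun p : ℝ × ℝ => f i p.1 p.2)
        (Set.Icc 0 1 ×ˢ Set.Icc 0 T)) →
      ∀ (φL φR : Fin (n + 1) → ℝ → ℝ),
      (∀ i, ContinuousOn (φL i) (Set.Icc 0 T)) →
      (∀ i, ContinuousOn (φR i) (Set.Icc 0 T)) →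
      ∀ (φB : Fin (n + 1) → ℝ → ℝ), (∀ i, ContinuousOn (φB i) (Set.Icc 0 1)) →
      -- u is in the domain of L :
      ∀ (u ux ut uxx : Fin (n + 1) → ℝ → ℝ → ℝ),
      (∀ i, ContinuousOn (fun p : ℝ × ℝ => u i p.1 p.2)
        (Set.Icc 0 1 ×ˢ Set.Icc 0 T)) →
      (∀ i, ContinuousOn (fun p : ℝ × ℝ => ux i p.1 p.2)
        (Set.Icc 0 1 ×ˢ Set.Icc 0 T)) →
      (∀ i, ∀ t ∈ Set.Icc (0:ℝ) T, ∀ x ∈ Set.Icc (0:ℝ) 1,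
        HasDerivWithinAt (fun y => u i y t) (ux i x t) (Set.Icc 0 1) x) →
      (∀ i, ∀ x ∈ Set.Ioo (0:ℝ) 1, ∀ t ∈ Set.Ioc (0:ℝ) T,
        HasDerivWithinAt (fun s => u i x s) (ut i x t) (Set.Icc 0 T) t) →
      (∀ i, ∀ t ∈ Set.Ioc (0:ℝ) T, ∀ x ∈ Set.Ioo (0:ℝ) 1,
        HasDerivWithinAt (fun y => ux i y t) (uxx i x t) (Set.Ioo 0 1) x) →
      (∀ i, ContinuousOn (fun p : ℝ × ℝ => ut i p.1 p.2)
        (Set.Ioo 0 1 ×ˢ Set.Ioc 0 T)) →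
      (∀ i, ContinuousOn (fun p : ℝ × ℝ => uxx i p.1 p.2)
        (Set.Ioo 0 1 ×ˢ Set.Ioc 0 T)) →
      -- u solves the Robin problem :
      (∀ i, ∀ x ∈ Set.Ioo (0:ℝ) 1, ∀ t ∈ Set.Ioc (0:ℝ) T,
        ut i x t - ε i * uxx i x t + ∑ j, a i j x t * u j x t = f i x t) →
      (∀ i, ∀ t ∈ Set.Icc (0:ℝ) T,
        u i 0 t - Real.sqrt (ε i) * ux i 0 t = φL i t) →
      (∀ i, ∀ t ∈ Set.Icc (0:ℝ) T,
        u i 1 t + Real.sqrt (ε i) * ux i 1 t = φR i t) →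
      (∀ i, ∀ x ∈ Set.Icc (0:ℝ) 1, u i x 0 = φB i x) →
      -- arbitrary upper bounds for the norms of the data :
      ∀ bL bR bB bf : ℝ,
      (∀ i, ∀ t ∈ Set.Icc (0:ℝ) T, |φL i t| ≤ bL) →
      (∀ i, ∀ t ∈ Set.Icc (0:ℝ) T, |φR i t| ≤ bR) →
      (∀ i, ∀ x ∈ Set.Icc (0:ℝ) 1, |φB i x| ≤ bB) →
      (∀ i, ∀ x ∈ Set.Icc (0:ℝ) 1, ∀ t ∈ Set.Icc (0:ℝ) T, |f i x t| ≤ bf) →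
      ∀ i, ∀ x ∈ Set.Icc (0:ℝ) 1, ∀ t ∈ Set.Icc (0:ℝ) T,
        |u i x t| ≤ C * (bL + bR + bB + bf) := by
  refine ⟨1 + 1/α, by positivity, ?_⟩
  intro ε hεpos hεlt1 hεmono a hacont hadiag haod hasum f hfcont φL φR hφLcont
    hφRcont φB hφBcont u ux ut uxx hu_cont hux_cont hux hut huxx hut_cont
    huxx_cont hLu hRobin0 hRobin1 hinit bL bR bB bf hbL hbR hbB hbf
  -- nonnegativity of the bounds
  have h00 : (0:ℝ) ∈ Set.Icc (0:ℝ) T := ⟨le_rfl, hT.le⟩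
  have h01 : (0:ℝ) ∈ Set.Icc (0:ℝ) 1 := ⟨le_rfl, zero_le_one⟩
  have hbL0 : 0 ≤ bL := (abs_nonneg _).trans (hbL 0 0 h00)
  have hbR0 : 0 ≤ bR := (abs_nonneg _).trans (hbR 0 0 h00)
  have hbB0 : 0 ≤ bB := (abs_nonneg _).trans (hbB 0 0 h01)
  have hbf0 : 0 ≤ bf := (abs_nonneg _).trans (hbf 0 0 h01 0 h00)
  set S := bL + bR + bB + bf with hSdef
  have hS0 : 0 ≤ S := by positivity
  set M := (1 + 1/α) * S with hMdef
  have hM0 : 0 ≤ M := by positivity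
  have hC1 : (0:ℝ) < 1/α := by positivity
  have hMbL : bL ≤ M := by nlinarith
  have hMbR : bR ≤ M := by nlinarith
  have hMbB : bB ≤ M := by nlinarith
  have hMbf : bf ≤ M := by nlinarith
  have hMα : bf ≤ α * M := by
    have h1 : α * M = (α + 1) * S := by
      rw [hMdef]; field_simp; try ring
    nlinarith
  -- apply the maximum principle to M + u and M - u
  have key : ∀ σ : ℝ, σ = 1 ∨ σ = -1 →
      ∀ i, ∀ x ∈ Set.Icc (0:ℝ) 1, ∀ t ∈ Set.Icc (0:ℝ) T,
      0 ≤ M + σ * u i x t := by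
    intro σ hσ
    have hσabs : ∀ r : ℝ, |r| ≤ bL ∨ |r| ≤ bR ∨ |r| ≤ bB ∨ |r| ≤ bf →
        -M ≤ σ * r ∧ σ * r ≤ M := by
      intro r hr
      have h1 : |σ * r| ≤ M := by
        rcases hσ with h | h <;> rw [h] <;> simp only [one_mul, neg_mul, abs_neg, abs_one] <;>
          rcases hr with h' | h' | h' | h' <;> linarith
      exact abs_le.mp h1
    refine max_principle n T hT α hα0 ε hεpos a haod hasum
      (fun i x t => M + σ * u i x t)
      (fun i x t => σ * ux i x t)
      (fun i x t => σ * ut i x t)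
      (fun i x t => σ * uxx i x t)
      ?_ ?_ ?_ ?_ ?_ ?_ ?_ ?_
    · intro i
      exact continuousOn_const.add (continuousOn_const.mul (hu_cont i))
    · intro i t ht x hx
      exact ((hux i t ht x hx).const_mul σ).const_add M
    · intro i x hx t ht
      exact ((hut i x hx t ht).const_mul σ).const_add M
    · intro i t ht x hx
      exact (huxx i t ht x hx).const_mul σ
    · -- the differential inequality
      intro i x hx t ht
      have hx' : x ∈ Set.Icc (0:ℝ) 1 := ⟨hx.1.le, hx.2.le⟩
      have ht' : t ∈ Set.Icc (0:ℝ) T := ⟨ht.1.le, ht.2⟩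
      have heq := hLu i x hx t ht
      have hsplit : ∑ j, a i j x t * (M + σ * u j x t)
          = (∑ j, a i j x t) * M + σ * ∑ j, a i j x t * u j x t := by
        rw [Finset.sum_mul, Finset.mul_sum, ← Finset.sum_add_distrib]
        apply Finset.sum_congr rfl
        intro j _; ring
      have hαa : α < ∑ j, a i j x t := hasum i x hx' t ht'
      have hfb : |f i x t| ≤ bf := hbf i x hx' t ht'
      have hfb' : -bf ≤ f i x t ∧ f i x t ≤ bf := abs_le.mp hfb
      have hMa : α * M ≤ (∑ j, a i j x t) * M :=
        mul_le_mul_of_nonneg_right hαa.le hM0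
      have hσf : -bf ≤ σ * f i x t := by
        rcases hσ with h | h <;> rw [h] <;> nlinarith [hfb'.1, hfb'.2]
      calc (0:ℝ) ≤ σ * f i x t + bf := by linarith
        _ ≤ σ * f i x t + α * M := by linarith
        _ ≤ σ * f i x t + (∑ j, a i j x t) * M := by linarith
        _ = σ * (ut i x t - ε i * uxx i x t + ∑ j, a i j x t * u j x t)
            + (∑ j, a i j x t) * M := by rw [heq]
        _ = σ * ut i x t - ε i * (σ * uxx i x t)
            + ∑ j, a i j x t * (M + σ * u j x t) := by rw [hsplit]; ring
    · -- left Robin condition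
      intro i t ht
      have h1 := hRobin0 i t ht
      have h2 := (hσabs (φL i t) (Or.inl (hbL i t ht))).1
      have : M + σ * u i 0 t - Real.sqrt (ε i) * (σ * ux i 0 t)
          = M + σ * (u i 0 t - Real.sqrt (ε i) * ux i 0 t) := by ring
      rw [this, h1]
      linarith
    · -- right Robin condition
      intro i t ht
      have h1 := hRobin1 i t ht
      have h2 := (hσabs (φR i t) (Or.inr (Or.inl (hbR i t ht)))).1
      have : M + σ * u i 1 t + Real.sqrt (ε i) * (σ * ux i 1 t)
          = M + σ * (u i 1 t + Real.sqrt (ε i) * ux i 1 t) := by ring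
      rw [this, h1]
      linarith
    · -- initial condition
      intro i x hx
      have h1 := hinit i x hx
      have h2 := (hσabs (φB i x) (Or.inr (Or.inr (Or.inl (hbB i x hx))))).1
      show 0 ≤ M + σ * u i x 0
      rw [h1]
      linarith
  intro i x hx t ht
  have hplus := key 1 (Or.inl rfl) i x hx t ht
  have hminus := key (-1) (Or.inr rfl) i x hx t ht
  have hfin : |u i x t| ≤ M := abs_le.mpr ⟨by linarith, by linarith⟩
  exact hfin
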